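/- Let ρ and ρ' be (MN)×(MN) positive semidefinite Hermitian matrices of trace one acting on ℂ^M⊗ℂ^N, having the same eigenvalues λ1, …, λ_{MN}, all of which are pairwise distinct (non-degenerate). Let X and Y be unitary matrices with ρ = X·Λ·X† and ρ' = Y·Λ·Y†, where Λ = diag(λ1, …, λ_{MN}). Then ρ' is equivalent to ρ under local unitary transformations (i.e., there exist an M×M unitary U1 and an N×N unitary U2 with ρ' = (U1⊗U2) ρ (U1⊗U2)†) if and only if there exist real numbers θ1, …, θ_{MN} such that the unitary matrix X·diag(e^{iθ1}, …, e^{iθ_{MN}})·Y† is tensor decomposable, i.e., equals W1⊗W2 for some M×M matrix W1 and N×N matrix W2. -/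

import Mathlib

open Matrix Kronecker
open scoped ComplexOrder

lemma kron_conjTranspose' {m n p q : Type*} (A : Matrix m n ℂ) (B : Matrix p q ℂ) :
    (A ⊗ₖ B)ᴴ = Aᴴ ⊗ₖ Bᴴ := by
  ext ⟨i, j⟩ ⟨k, l⟩
  simp [Matrix.conjTranspose_apply, Matrix.kroneckerMap_apply]

lemma exp_conj_unit (t : ℝ) :
    (starRingEnd ℂ) (Complex.exp (t * Complex.I)) * Complex.exp (t * Complex.I) = 1 := by
  rw [← Complex.exp_conj, ← Complex.exp_add, _root_.map_mul, Complex.conj_I, Complex.conj_ofReal]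
  have h : (t : ℂ) * (-Complex.I) + t * Complex.I = 0 := by ring
  rw [h, Complex.exp_zero]

lemma exp_neg_arg_of_abs_one (z : ℂ) (hz : ‖z‖ = 1) :
    Complex.exp ((-(z.arg) : ℝ) * Complex.I) = (starRingEnd ℂ) z := by
  conv_rhs => rw [← Complex.norm_mul_exp_arg_mul_I z]
  rw [_root_.map_mul, ← Complex.exp_conj, _root_.map_mul, Complex.conj_I, Complex.conj_ofReal,
    Complex.conj_ofReal, hz, Complex.ofReal_one, one_mul]
  congr 1
  push_cast
  ring

set_option maxHeartbeats 1000000 in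
/-- For two non-degenerate density matrices `ρ = XΛX†` and `ρ' = YΛY†` on
`ℂᴹ ⊗ ℂᴺ` with the same eigenvalue diagonal `Λ` (all eigenvalues pairwise distinct)
and unitary `X`, `Y`: `ρ'` is local unitary equivalent to `ρ` iff for some phases
`θ₁, …, θ_{MN}` the unitary matrix `X·diag(e^{iθ₁},…,e^{iθ_{MN}})·Y†` is tensor
decomposable. -/
theorem nondegenerate_LU_iff_decomposable (M N : ℕ)
    (ρ ρ' : Matrix (Fin M × Fin N) (Fin M × Fin N) ℂ)
    (hρ : ρ.PosSemidef) (hρ' : ρ'.PosSemidef)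
    (htr : ρ.trace = 1) (htr' : ρ'.trace = 1)
    (lam : Fin M × Fin N → ℝ) (hdist : Function.Injective lam)
    (X Y : Matrix (Fin M × Fin N) (Fin M × Fin N) ℂ)
    (hX : X ∈ Matrix.unitaryGroup (Fin M × Fin N) ℂ)
    (hY : Y ∈ Matrix.unitaryGroup (Fin M × Fin N) ℂ)
    (hρX : ρ = X * Matrix.diagonal (fun i => (lam i : ℂ)) * Xᴴ)
    (hρY : ρ' = Y * Matrix.diagonal (fun i => (lam i : ℂ)) * Yᴴ) :
    (∃ (U1 : Matrix (Fin M) (Fin M) ℂ) (U2 : Matrix (Fin N) (Fin N) ℂ),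
        U1 ∈ Matrix.unitaryGroup (Fin M) ℂ ∧ U2 ∈ Matrix.unitaryGroup (Fin N) ℂ ∧
        ρ' = (U1 ⊗ₖ U2) * ρ * (U1 ⊗ₖ U2)ᴴ) ↔
      ∃ (θ : Fin M × Fin N → ℝ) (W1 : Matrix (Fin M) (Fin M) ℂ)
          (W2 : Matrix (Fin N) (Fin N) ℂ),
        X * Matrix.diagonal (fun i => Complex.exp (θ i * Complex.I)) * Yᴴ = W1 ⊗ₖ W2 := by
  have hne : Nonempty (Fin M × Fin N) := by
    by_contra h
    rw [not_nonempty_iff] at h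
    rw [Matrix.trace] at htr
    simp at htr
  obtain ⟨⟨i₀, j₀⟩⟩ := hne
  set Λ := Matrix.diagonal (fun i : Fin M × Fin N => (lam i : ℂ)) with hΛ
  have hXl : Xᴴ * X = 1 := by simpa [Matrix.star_eq_conjTranspose] using hX.1
  have hXr : X * Xᴴ = 1 := by simpa [Matrix.star_eq_conjTranspose] using hX.2
  have hYl : Yᴴ * Y = 1 := by simpa [Matrix.star_eq_conjTranspose] using hY.1
  have hYr : Y * Yᴴ = 1 := by simpa [Matrix.star_eq_conjTranspose] using hY.2
  constructor
  · rintro ⟨U1, U2, hU1, hU2, hrel⟩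
    set U := U1 ⊗ₖ U2 with hU
    have hUl : Uᴴ * U = 1 := by
      rw [hU, kron_conjTranspose', ← Matrix.mul_kronecker_mul]
      have h1 : U1ᴴ * U1 = 1 := by simpa [Matrix.star_eq_conjTranspose] using hU1.1
      have h2 : U2ᴴ * U2 = 1 := by simpa [Matrix.star_eq_conjTranspose] using hU2.1
      rw [h1, h2, Matrix.one_kronecker_one]
    rw [hρX, hρY] at hrel
    set Z := Yᴴ * U * X with hZ
    have hZl : Zᴴ * Z = 1 := by
      rw [hZ]
      simp only [Matrix.conjTranspose_mul, Matrix.conjTranspose_conjTranspose]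
      calc Xᴴ * (Uᴴ * Y) * (Yᴴ * U * X)
          = Xᴴ * (Uᴴ * (Y * Yᴴ) * U) * X := by simp only [Matrix.mul_assoc]
        _ = 1 := by rw [hYr, Matrix.mul_one, hUl, Matrix.mul_one, hXl]
    have h1 : Z * Λ * Zᴴ = Λ := by
      rw [hZ]
      simp only [Matrix.conjTranspose_mul, Matrix.conjTranspose_conjTranspose]
      calc Yᴴ * U * X * Λ * (Xᴴ * (Uᴴ * Y))
          = Yᴴ * (U * (X * Λ * Xᴴ) * Uᴴ) * Y := by simp only [Matrix.mul_assoc]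
        _ = Yᴴ * (Y * Λ * Yᴴ) * Y := by rw [← hrel]
        _ = (Yᴴ * Y) * Λ * (Yᴴ * Y) := by simp only [Matrix.mul_assoc]
        _ = Λ := by rw [hYl, Matrix.one_mul, Matrix.mul_one]
    have hcomm : Z * Λ = Λ * Z := by
      calc Z * Λ = Z * Λ * (Zᴴ * Z) := by rw [hZl, Matrix.mul_one]
        _ = (Z * Λ * Zᴴ) * Z := by simp only [Matrix.mul_assoc]
        _ = Λ * Z := by rw [h1]
    have hoff : ∀ i j, i ≠ j → Z i j = 0 := by
      intro i j hij
      have h := congrFun (congrFun hcomm i) j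
      rw [hΛ] at h
      simp only [Matrix.mul_diagonal, Matrix.diagonal_mul] at h
      by_contra hz
      refine hij (hdist ?_)
      have h2 : Z i j * (lam i : ℂ) = Z i j * (lam j : ℂ) := by linear_combination -h
      have hlam : (lam i : ℂ) = (lam j : ℂ) := mul_left_cancel₀ hz h2
      exact_mod_cast hlam
    have hdiag : Z = Matrix.diagonal (fun i => Z i i) := by
      ext i j
      by_cases h : i = j
      · subst h; simp
      · simp [Matrix.diagonal_apply_ne _ h, hoff i j h]
    have habs : ∀ i, ‖Z i i‖ = 1 := by
      intro i
      have h2 : (Zᴴ * Z) i i = (1 : Matrix (Fin M × Fin N) (Fin M × Fin N) ℂ) i i := by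
        rw [hZl]
      rw [Matrix.mul_apply, Finset.sum_eq_single i] at h2
      · rw [Matrix.conjTranspose_apply, Matrix.one_apply_eq] at h2
        have h3 : ((Complex.normSq (Z i i) : ℝ) : ℂ) = 1 := by
          rw [Complex.normSq_eq_conj_mul_self]; exact h2
        have hn : Complex.normSq (Z i i) = 1 := by exact_mod_cast h3
        rw [Complex.norm_def, hn, Real.sqrt_one]
      · intro k _ hk
        rw [Matrix.conjTranspose_apply, hoff k i hk]
        simp
      · simp
    refine ⟨fun i => -(Z i i).arg, U1ᴴ, U2ᴴ, ?_⟩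
    have hfun : (fun i : Fin M × Fin N => Complex.exp ((-(Z i i).arg : ℝ) * Complex.I))
        = fun i => (starRingEnd ℂ) (Z i i) :=
      funext fun i => exp_neg_arg_of_abs_one _ (habs i)
    have hD : Matrix.diagonal (fun i : Fin M × Fin N =>
        Complex.exp ((-(Z i i).arg : ℝ) * Complex.I)) = Zᴴ := by
      rw [hfun]
      conv_rhs => rw [hdiag]
      rw [Matrix.diagonal_conjTranspose]
      rfl
    rw [hD, ← kron_conjTranspose', ← hU, hZ]
    simp only [Matrix.conjTranspose_mul, Matrix.conjTranspose_conjTranspose]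
    calc X * (Xᴴ * (Uᴴ * Y)) * Yᴴ
        = (X * Xᴴ) * Uᴴ * (Y * Yᴴ) := by simp only [Matrix.mul_assoc]
      _ = Uᴴ := by rw [hXr, hYr, Matrix.one_mul, Matrix.mul_one]
  · rintro ⟨θ, W1, W2, hW⟩
    set D := Matrix.diagonal (fun i : Fin M × Fin N =>
      Complex.exp (θ i * Complex.I)) with hDdef
    have hDl : Dᴴ * D = 1 := by
      ext i j
      rw [hDdef, Matrix.diagonal_conjTranspose, Matrix.diagonal_mul_diagonal]
      by_cases h : i = j
      · subst h
        rw [Matrix.diagonal_apply_eq, Matrix.one_apply_eq]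
        exact exp_conj_unit (θ i)
      · rw [Matrix.diagonal_apply_ne _ h, Matrix.one_apply_ne h]
    have hDΛ : Dᴴ * Λ * D = Λ := by
      ext i j
      rw [hDdef, hΛ, Matrix.diagonal_conjTranspose, Matrix.diagonal_mul_diagonal,
        Matrix.diagonal_mul_diagonal]
      by_cases h : i = j
      · subst h
        rw [Matrix.diagonal_apply_eq, Matrix.diagonal_apply_eq]
        have hu := exp_conj_unit (θ i)
        show (starRingEnd ℂ) (Complex.exp (θ i * Complex.I)) * (lam i : ℂ) *
          Complex.exp (θ i * Complex.I) = (lam i : ℂ)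
        linear_combination (lam i : ℂ) * hu
      · rw [Matrix.diagonal_apply_ne _ h, Matrix.diagonal_apply_ne _ h]
    have hKl : (W1 ⊗ₖ W2)ᴴ * (W1 ⊗ₖ W2) = 1 := by
      rw [← hW]
      simp only [Matrix.conjTranspose_mul, Matrix.conjTranspose_conjTranspose]
      calc Y * (Dᴴ * Xᴴ) * (X * D * Yᴴ)
          = Y * (Dᴴ * (Xᴴ * X) * D) * Yᴴ := by simp only [Matrix.mul_assoc]
        _ = 1 := by rw [hXl, Matrix.mul_one, hDl, Matrix.mul_one, hYr]
    have hAB : (W1ᴴ * W1) ⊗ₖ (W2ᴴ * W2) = 1 := by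
      rw [Matrix.mul_kronecker_mul, ← kron_conjTranspose']
      exact hKl
    have hentry : ∀ (i k : Fin M) (j l : Fin N),
        (W1ᴴ * W1) i k * (W2ᴴ * W2) j l = if i = k ∧ j = l then 1 else 0 := by
      intro i k j l
      have h := congrFun (congrFun hAB (i, j)) (k, l)
      simpa [Matrix.kroneckerMap_apply, Matrix.one_apply, Prod.ext_iff] using h
    obtain ⟨r, hr0, hArr⟩ : ∃ r : ℝ, 0 ≤ r ∧ (W1ᴴ * W1) i₀ i₀ = (r : ℂ) := by
      refine ⟨∑ k, Complex.normSq (W1 k i₀),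
        Finset.sum_nonneg fun _ _ => Complex.normSq_nonneg _, ?_⟩
      rw [Matrix.mul_apply]
      push_cast
      refine Finset.sum_congr rfl fun k _ => ?_
      rw [Matrix.conjTranspose_apply, Complex.star_def, ← Complex.normSq_eq_conj_mul_self]
    have hrb : (r : ℂ) * (W2ᴴ * W2) j₀ j₀ = 1 := by
      rw [← hArr]
      simpa using hentry i₀ i₀ j₀ j₀
    have hrne : (r : ℂ) ≠ 0 := by
      intro h
      rw [h, zero_mul] at hrb
      exact one_ne_zero hrb.symm
    have hrne' : r ≠ 0 := Complex.ofReal_ne_zero.mp hrne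
    have hrpos : 0 < r := lt_of_le_of_ne hr0 (Ne.symm hrne')
    have hBval : (W2ᴴ * W2) j₀ j₀ = ((r : ℂ))⁻¹ := by
      field_simp at hrb ⊢
      linear_combination hrb
    have hA1 : W1ᴴ * W1 = (r : ℂ) • 1 := by
      ext i k
      have h := hentry i k j₀ j₀
      rw [hBval] at h
      by_cases hik : i = k
      · subst hik
        rw [if_pos ⟨rfl, rfl⟩] at h
        simp only [Matrix.smul_apply, Matrix.one_apply_eq, smul_eq_mul, mul_one]
        field_simp at h
        exact h
      · rw [if_neg (by simp [hik])] at h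
        simp only [Matrix.smul_apply, Matrix.one_apply_ne hik, smul_eq_mul, mul_zero]
        exact (mul_eq_zero.mp h).resolve_right (inv_ne_zero hrne)
    have hB1 : W2ᴴ * W2 = ((r : ℂ))⁻¹ • 1 := by
      ext j l
      have h := hentry i₀ i₀ j l
      rw [hArr] at h
      by_cases hjl : j = l
      · subst hjl
        rw [if_pos ⟨rfl, rfl⟩] at h
        simp only [Matrix.smul_apply, Matrix.one_apply_eq, smul_eq_mul, mul_one]
        field_simp
        linear_combination h
      · rw [if_neg (by simp [hjl])] at h
        simp only [Matrix.smul_apply, Matrix.one_apply_ne hjl, smul_eq_mul, mul_zero]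
        exact (mul_eq_zero.mp h).resolve_left hrne
    set s := Real.sqrt r with hs
    have hs2 : s * s = r := Real.mul_self_sqrt hr0
    have hs2' : ((s : ℂ)) * ((s : ℂ)) = (r : ℂ) := by exact_mod_cast hs2
    have hsne : s ≠ 0 := by
      rw [hs]
      exact Real.sqrt_ne_zero'.mpr hrpos
    have hsne' : (s : ℂ) ≠ 0 := Complex.ofReal_ne_zero.mpr hsne
    set V1 := ((s⁻¹ : ℝ) : ℂ) • W1 with hV1def
    set V2 := ((s : ℝ) : ℂ) • W2 with hV2def
    have hV1 : V1ᴴ * V1 = 1 := by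
      rw [hV1def, Matrix.conjTranspose_smul, Matrix.smul_mul, Matrix.mul_smul, hA1,
        smul_smul, smul_smul]
      have hc : star (((s⁻¹ : ℝ)) : ℂ) * ((s⁻¹ : ℝ) : ℂ) * (r : ℂ) = 1 := by
        rw [Complex.star_def, Complex.conj_ofReal]
        push_cast
        rw [← hs2']
        field_simp
      rw [hc, one_smul]
    have hV2 : V2ᴴ * V2 = 1 := by
      rw [hV2def, Matrix.conjTranspose_smul, Matrix.smul_mul, Matrix.mul_smul, hB1,
        smul_smul, smul_smul]
      have hc : star (((s : ℝ)) : ℂ) * ((s : ℝ) : ℂ) * ((r : ℂ))⁻¹ = 1 := by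
        rw [Complex.star_def, Complex.conj_ofReal, ← hs2']
        field_simp
      rw [hc, one_smul]
    have hVK : V1 ⊗ₖ V2 = W1 ⊗ₖ W2 := by
      rw [hV1def, hV2def, Matrix.smul_kronecker, Matrix.kronecker_smul, smul_smul]
      have hc : ((s⁻¹ : ℝ) : ℂ) * ((s : ℝ) : ℂ) = 1 := by
        push_cast
        field_simp
      rw [hc, one_smul]
    refine ⟨V1ᴴ, V2ᴴ, ?_, ?_, ?_⟩
    · rw [Matrix.mem_unitaryGroup_iff]
      simpa [Matrix.star_eq_conjTranspose] using hV1
    · rw [Matrix.mem_unitaryGroup_iff]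
      simpa [Matrix.star_eq_conjTranspose] using hV2
    · rw [← kron_conjTranspose', hVK, ← hW, hρX, hρY]
      simp only [Matrix.conjTranspose_mul, Matrix.conjTranspose_conjTranspose]
      calc Y * Λ * Yᴴ
          = Y * (Dᴴ * ((Xᴴ * X) * Λ * (Xᴴ * X)) * D) * Yᴴ := by
            rw [hXl, Matrix.one_mul, Matrix.mul_one, hDΛ]
        _ = Y * (Dᴴ * Xᴴ) * (X * Λ * Xᴴ) * (X * D * Yᴴ) := by simp only [Matrix.mul_assoc]
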